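/- Let A ∈ ℝ^{n×n} be row-stochastic, c, p̄ ∈ ℝ^n nonnegative, and let p* = p*[A,c,p̄] be the unique minimizer over 𝒫_pr(c,p̄) = {p ∈ ℝ^n : 0 ≤ p ≤ p̄, p ≤ c + Aᵀp} of some (equivalently, any) decreasing function f : [0,p̄] → ℝ. Suppose the digraph G[A] has a strongly connected sink component with node set V⁰ ⊊ {1,…,n} such that p̄_i > 0 for all i ∈ V⁰. Then p*_i > 0 for all i ∈ V⁰. -/

import Mathlib

open Matrix Finset

/-- The polytope `𝒫_pr(c, p̄)` of feasible payment vectors under the pro-rata rule: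
`0 ≤ p ≤ p̄` and `p ≤ c + Aᵀp`. -/
def FeasibleVec (n : ℕ) (A : Matrix (Fin n) (Fin n) ℝ) (c pbar p : Fin n → ℝ) : Prop :=
  (∀ i, 0 ≤ p i) ∧ (∀ i, p i ≤ pbar i) ∧ (∀ i, p i ≤ c i + Aᵀ.mulVec p i)

/-- A function `f : [0, p̄] → ℝ` is decreasing: `p ≤ q` with `p ≠ q` implies `f q < f p`. -/
def DecreasingOn (n : ℕ) (pbar : Fin n → ℝ) (f : (Fin n → ℝ) → ℝ) : Prop :=
  ∀ p q : Fin n → ℝ, (∀ i, 0 ≤ p i) → (∀ i, p i ≤ q i) → (∀ i, q i ≤ pbar i) →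
    p ≠ q → f q < f p

/-- Reachability in the weighted digraph `G[A]`, which has an arc `i → j` iff `A i j > 0`. -/
def Reach {n : ℕ} (A : Matrix (Fin n) (Fin n) ℝ) (i j : Fin n) : Prop :=
  Relation.ReflTransGen (fun a b => 0 < A a b) i j

/-- `V0` is a strongly connected component of `G[A]`: it is nonempty, all its nodes are
mutually reachable, and it is maximal with this property. -/
def IsSCC {n : ℕ} (A : Matrix (Fin n) (Fin n) ℝ) (V0 : Set (Fin n)) : Prop :=
  V0.Nonempty ∧ (∀ i ∈ V0, ∀ j ∈ V0, Reach A i j) ∧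
  (∀ i ∈ V0, ∀ j, Reach A i j → Reach A j i → j ∈ V0)

/-- `V0` is a sink in `G[A]`: no arc leaves it. -/
def IsSink {n : ℕ} (A : Matrix (Fin n) (Fin n) ℝ) (V0 : Set (Fin n)) : Prop :=
  ∀ i ∈ V0, ∀ j, 0 < A i j → j ∈ V0

/-- If `V⁰ ⊊ {1,…,n}` is the node set of a strongly connected sink component of `G[A]`
with `p̄ᵢ > 0` for all `i ∈ V⁰`, then the minimizer `p*` of any decreasing function over
`𝒫_pr(c, p̄)` satisfies `p*ᵢ > 0` for all `i ∈ V⁰`. -/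
theorem prorata_min_pos_on_sink (n : ℕ) (hn : 1 ≤ n)
    (A : Matrix (Fin n) (Fin n) ℝ) (hA0 : ∀ i j, 0 ≤ A i j) (hA1 : ∀ i, ∑ j, A i j = 1)
    (c pbar : Fin n → ℝ) (hc : ∀ i, 0 ≤ c i) (hpbar : ∀ i, 0 ≤ pbar i)
    (f : (Fin n → ℝ) → ℝ) (hf : DecreasingOn n pbar f)
    (pstar : Fin n → ℝ) (hfeas : FeasibleVec n A c pbar pstar)
    (hmin : ∀ q, FeasibleVec n A c pbar q → f pstar ≤ f q)
    (V0 : Set (Fin n)) (hscc : IsSCC A V0) (hsink : IsSink A V0)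
    (hproper : V0 ≠ Set.univ) (hpos : ∀ i ∈ V0, 0 < pbar i) :
    ∀ i ∈ V0, 0 < pstar i := by
  classical
  obtain ⟨hp0, hpb, hpc⟩ := hfeas
  have hAT : ∀ (p : Fin n → ℝ) i, Aᵀ.mulVec p i = ∑ k, A k i * p k := by
    intro p i
    simp [Matrix.mulVec, dotProduct, Matrix.transpose_apply]
  have hmono : ∀ (p q : Fin n → ℝ), (∀ k, p k ≤ q k) → ∀ i, Aᵀ.mulVec p i ≤ Aᵀ.mulVec q i := by
    intro p q hpq i
    rw [hAT, hAT]
    exact Finset.sum_le_sum fun k _ => mul_le_mul_of_nonneg_left (hpq k) (hA0 k i)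
  -- Step A: if pstar i = 0 and pbar i > 0 then c i + (Aᵀ pstar) i ≤ 0
  have stepA : ∀ i, 0 < pbar i → pstar i = 0 → c i + Aᵀ.mulVec pstar i ≤ 0 := by
    intro i hpi h0
    by_contra hcon
    push_neg at hcon
    set δ : ℝ := min (pbar i) (c i + Aᵀ.mulVec pstar i) with hδ
    have hδpos : 0 < δ := lt_min hpi hcon
    set q : Fin n → ℝ := fun j => if j = i then δ else pstar j with hq
    have hle : ∀ k, pstar k ≤ q k := by
      intro k
      simp only [hq]
      split
      · next h => subst h; rw [h0]; exact hδpos.le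
      · exact le_rfl
    have hqfeas : FeasibleVec n A c pbar q := by
      refine ⟨fun j => le_trans (hp0 j) (hle j), fun j => ?_, fun j => ?_⟩
      · simp only [hq]
        split
        · next h => subst h; exact min_le_left _ _
        · exact hpb j
      · have h2 : Aᵀ.mulVec pstar j ≤ Aᵀ.mulVec q j := hmono _ _ hle j
        simp only [hq]
        split
        · next h =>
            subst h
            have : δ ≤ c j + Aᵀ.mulVec pstar j := min_le_right _ _
            linarith
        · have := hpc j
          linarith
    have hne : pstar ≠ q := by
      intro h
      have h2 := congrFun h i
      simp only [hq, if_pos rfl] at h2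
      rw [h0] at h2
      linarith
    have h3 := hf pstar q hp0 hle hqfeas.2.1 hne
    have h4 := hmin q hqfeas
    linarith
  -- Step A': consequences
  have stepA' : ∀ i, 0 < pbar i → pstar i = 0 → ∀ k, 0 < A k i → pstar k = 0 := by
    intro i hpi h0 k hk
    have h := stepA i hpi h0
    rw [hAT] at h
    have hsum : 0 ≤ ∑ j, A j i * pstar j :=
      Finset.sum_nonneg fun j _ => mul_nonneg (hA0 j i) (hp0 j)
    have hsum0 : ∑ j, A j i * pstar j = 0 := le_antisymm (by have := hc i; linarith) hsum
    have hterm : ∀ j ∈ Finset.univ, 0 ≤ A j i * pstar j :=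
      fun j _ => mul_nonneg (hA0 j i) (hp0 j)
    have h5 := (Finset.sum_eq_zero_iff_of_nonneg hterm).mp hsum0 k (Finset.mem_univ k)
    rcases mul_eq_zero.mp h5 with h6 | h6
    · exact absurd h6 (ne_of_gt hk)
    · exact h6
  -- Step B: if pstar vanishes somewhere on V0, it vanishes on all of V0
  have stepB : ∀ i0 ∈ V0, pstar i0 = 0 → ∀ j ∈ V0, pstar j = 0 := by
    intro i0 hi0 h0 j hj
    have hr : Reach A j i0 := hscc.2.1 j hj i0 hi0
    revert hj
    induction hr using Relation.ReflTransGen.head_induction_on with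
    | refl => intro _; exact h0
    | head hab hbr ih =>
      intro ha
      next a b =>
        have hb : b ∈ V0 := hsink a ha b hab
        have hb0 := ih hb
        exact stepA' b (hpos b hb) hb0 a hab
  -- Main argument by contradiction
  by_contra hneg
  push_neg at hneg
  obtain ⟨i0, hi0, hps0⟩ := hneg
  have hps0' : pstar i0 = 0 := le_antisymm hps0 (hp0 i0)
  have hall0 : ∀ j ∈ V0, pstar j = 0 := stepB i0 hi0 hps0'
  haveI : Fintype ↥V0 := Fintype.ofFinite _
  haveI : Nonempty ↥V0 := hscc.1.to_subtype
  set B : Matrix ↥V0 ↥V0 ℝ := fun i j => A i j with hB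
  have hzero : ∀ (i : ↥V0) (j : Fin n), j ∉ V0 → A i j = 0 := by
    intro i j hj
    by_contra h
    exact hj (hsink i i.2 j (lt_of_le_of_ne (hA0 i j) (Ne.symm h)))
  have hBrow : ∀ i : ↥V0, ∑ j : ↥V0, B i j = 1 := by
    intro i
    have e1 : ∑ j ∈ V0.toFinset, A (i : Fin n) j = ∑ j : ↥V0, A (i : Fin n) j :=
      Finset.sum_subtype V0.toFinset (fun x => Set.mem_toFinset) (fun j => A i j)
    have e2 : ∑ j ∈ V0.toFinset, A (i : Fin n) j = ∑ j, A (i : Fin n) j := by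
      apply Finset.sum_subset (Finset.subset_univ _)
      intro j _ hj
      exact hzero i j (by simpa [Set.mem_toFinset] using hj)
    calc ∑ j : ↥V0, B i j = ∑ j ∈ V0.toFinset, A (i : Fin n) j := e1.symm
      _ = ∑ j, A (i : Fin n) j := e2
      _ = 1 := hA1 i
  have hdet : (B - 1).det = 0 := by
    rw [← Matrix.exists_mulVec_eq_zero_iff]
    refine ⟨fun _ => 1, ?_, ?_⟩
    · intro h
      have := congrFun h (Classical.arbitrary ↥V0)
      simp at this
    · funext i
      rw [Matrix.sub_mulVec, Matrix.one_mulVec]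
      have : B.mulVec (fun _ => 1) i = 1 := by
        simp [Matrix.mulVec, dotProduct, hBrow i]
      simp [this]
  have hdetT : (Bᵀ - 1).det = 0 := by
    rw [show Bᵀ - 1 = (B - 1)ᵀ by rw [Matrix.transpose_sub, Matrix.transpose_one],
      Matrix.det_transpose]
    exact hdet
  obtain ⟨w0, hw0ne, hw0⟩ := (Matrix.exists_mulVec_eq_zero_iff).mpr hdetT
  have heig0 : Bᵀ.mulVec w0 = w0 := by
    rwa [Matrix.sub_mulVec, Matrix.one_mulVec, sub_eq_zero] at hw0
  obtain ⟨w, heig, k0, hk0⟩ : ∃ w : ↥V0 → ℝ, Bᵀ.mulVec w = w ∧ ∃ k, 0 < w k := by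
    by_cases h : ∃ k, 0 < w0 k
    · exact ⟨w0, heig0, h⟩
    · push_neg at h
      refine ⟨-w0, by rw [Matrix.mulVec_neg, heig0], ?_⟩
      obtain ⟨k, hk⟩ := Function.ne_iff.mp hw0ne
      refine ⟨k, ?_⟩
      have : w0 k < 0 := lt_of_le_of_ne (h k) (by simpa using hk)
      simpa using this
  set u : Fin n → ℝ := fun i => if h : i ∈ V0 then max (w ⟨i, h⟩) 0 else 0 with hu
  have hu0 : ∀ i, 0 ≤ u i := by
    intro i
    simp only [hu]
    split
    · exact le_max_right _ _
    · exact le_rfl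
  have huV : ∀ (i : Fin n) (h : i ∈ V0), u i = max (w ⟨i, h⟩) 0 := fun i h => dif_pos h
  have huN : ∀ i, i ∉ V0 → u i = 0 := fun i h => dif_neg h
  have hkey : ∀ i, u i ≤ Aᵀ.mulVec u i := by
    intro i
    rw [hAT]
    have hterm : ∀ k ∈ (Finset.univ : Finset (Fin n)), 0 ≤ A k i * u k :=
      fun k _ => mul_nonneg (hA0 k i) (hu0 k)
    by_cases hi : i ∈ V0
    · rw [huV i hi]
      have hsubty : ∑ k ∈ V0.toFinset, A k i * u k = ∑ k : ↥V0, A (k : Fin n) i * u k :=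
        Finset.sum_subtype V0.toFinset (fun x => Set.mem_toFinset) (fun k => A k i * u k)
      have hsub : ∑ k ∈ V0.toFinset, A k i * u k ≤ ∑ k, A k i * u k :=
        Finset.sum_le_sum_of_subset_of_nonneg (Finset.subset_univ _) (fun k hk _ => hterm k hk)
      have h1 : ∀ k : ↥V0, u (k : Fin n) = max (w k) 0 := by
        intro k
        rw [huV (k : Fin n) k.2]
      have heigi : ∑ k : ↥V0, A (k : Fin n) i * w k = w ⟨i, hi⟩ := by
        have h2 := congrFun heig ⟨i, hi⟩
        simpa [Matrix.mulVec, dotProduct, Matrix.transpose_apply, hB, Matrix.transpose, Matrix.of_apply] using h2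
      have hge1 : w ⟨i, hi⟩ ≤ ∑ k : ↥V0, A (k : Fin n) i * u (k : Fin n) := by
        rw [← heigi]
        refine Finset.sum_le_sum fun k _ => ?_
        rw [h1 k]
        exact mul_le_mul_of_nonneg_left (le_max_left _ _) (hA0 _ _)
      have hge0 : (0 : ℝ) ≤ ∑ k : ↥V0, A (k : Fin n) i * u (k : Fin n) :=
        Finset.sum_nonneg fun k _ => mul_nonneg (hA0 _ _) (hu0 _)
      calc max (w ⟨i, hi⟩) 0 ≤ ∑ k : ↥V0, A (k : Fin n) i * u (k : Fin n) := max_le hge1 hge0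
        _ = ∑ k ∈ V0.toFinset, A k i * u k := hsubty.symm
        _ ≤ ∑ k, A k i * u k := hsub
    · rw [huN i hi]
      exact Finset.sum_nonneg hterm
  have hj0 : 0 < u (k0 : Fin n) := by
    rw [huV (k0 : Fin n) k0.2]
    exact lt_of_lt_of_le hk0 (le_max_left _ _)
  set M : ℝ := 1 + ∑ i, u i with hM
  have hMpos : 0 < M :=
    add_pos_of_pos_of_nonneg one_pos (Finset.sum_nonneg fun i _ => hu0 i)
  have huM : ∀ i, u i ≤ M := by
    intro i
    have h2 : u i ≤ ∑ j, u j := Finset.single_le_sum (fun j _ => hu0 j) (Finset.mem_univ i)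
    simp only [hM]
    linarith
  have htne : V0.toFinset.Nonempty := by
    obtain ⟨x, hx⟩ := hscc.1
    exact ⟨x, Set.mem_toFinset.mpr hx⟩
  set m : ℝ := V0.toFinset.inf' htne pbar with hm
  have hmpos : 0 < m :=
    (Finset.lt_inf'_iff htne).mpr fun i hi => hpos i (Set.mem_toFinset.mp hi)
  have hmle : ∀ i ∈ V0, m ≤ pbar i := fun i hi => Finset.inf'_le pbar (Set.mem_toFinset.mpr hi)
  set ε : ℝ := m / M with hε
  have hεpos : 0 < ε := div_pos hmpos hMpos
  set q : Fin n → ℝ := fun i => max (pstar i) (ε * u i) with hq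
  have hle : ∀ i, pstar i ≤ q i := fun i => le_max_left _ _
  have hεu : ∀ i, ε * u i ≤ q i := fun i => le_max_right _ _
  have hqfeas : FeasibleVec n A c pbar q := by
    refine ⟨fun i => le_trans (hp0 i) (hle i), fun i => ?_, fun i => ?_⟩
    · apply max_le (hpb i)
      by_cases hi : i ∈ V0
      · calc ε * u i ≤ ε * M := mul_le_mul_of_nonneg_left (huM i) hεpos.le
          _ = m := div_mul_cancel₀ m (ne_of_gt hMpos)
          _ ≤ pbar i := hmle i hi
      · rw [huN i hi]
        simpa using hpbar i
    · apply max_le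
      · have h2 := hmono pstar q hle i
        have h3 := hpc i
        linarith
      · have h1 : ε * u i ≤ ε * Aᵀ.mulVec u i := mul_le_mul_of_nonneg_left (hkey i) hεpos.le
        have h2 : ε * Aᵀ.mulVec u i = Aᵀ.mulVec (fun k => ε * u k) i := by
          rw [hAT, hAT, Finset.mul_sum]
          exact Finset.sum_congr rfl fun k _ => by ring
        have h3 : Aᵀ.mulVec (fun k => ε * u k) i ≤ Aᵀ.mulVec q i := hmono _ _ hεu i
        have h4 := hc i
        linarith
  have hne : pstar ≠ q := by
    intro h
    have h2 := congrFun h (k0 : Fin n)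
    have h3 : pstar (k0 : Fin n) = 0 := hall0 _ k0.2
    have h4 : 0 < ε * u (k0 : Fin n) := mul_pos hεpos hj0
    have h5 := hεu (k0 : Fin n)
    rw [← h2, h3] at h5
    linarith
  exact absurd (hmin q hqfeas) (not_le.mpr (hf pstar q hp0 hle hqfeas.2.1 hne))
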